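/- In the EIITC setup, for every 1 ≤ k ≤ N one has d(ψ_{k+1}, ψ'_k) := Σ_{i∈ι} |ψ_{k+1} i − ψ'_k i| ≤ e^{γ(1/r − r)} − 1. Consequently, if c ∈ (0,1) and the transaction-cost ratio satisfies c_{k+1} ≤ (c/(1−c))·d(ψ_{k+1}, ψ'_k), then c_{k+1} ≤ (c/(1−c))·(e^{γ(1/r − r)} − 1). -/

import Mathlib

open Finset

lemma EIITC_key
    {ι : Type*} [Fintype ι] [Nonempty ι]
    (r γ : ℝ) (hr0 : 0 < r) (hr1 : r < 1) (hγ : 0 < γ)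
    (w e : ι → ℝ) (hw : ∀ i, 0 < w i) (hwsum : ∑ i, w i = 1)
    (helb : ∀ i, r ≤ e i) (heub : ∀ i, e i ≤ 1) :
    ∑ i, |w i * Real.exp (γ * e i / (∑ j, w j * e j)) /
        (∑ j, w j * Real.exp (γ * e j / (∑ j', w j' * e j'))) - w i|
      ≤ Real.exp (γ * (1 / r - r)) - 1 := by
  set D := ∑ j, w j * e j with hD
  have hrD : r ≤ D := by
    calc r = ∑ j, w j * r := by rw [← Finset.sum_mul, hwsum, one_mul]
    _ ≤ D := Finset.sum_le_sum fun j _ =>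
        mul_le_mul_of_nonneg_left (helb j) (hw j).le
  have hD1 : D ≤ 1 := by
    calc D ≤ ∑ j, w j * 1 := Finset.sum_le_sum fun j _ =>
        mul_le_mul_of_nonneg_left (heub j) (hw j).le
    _ = 1 := by rw [← Finset.sum_mul, hwsum, one_mul]
  have hDpos : 0 < D := lt_of_lt_of_le hr0 hrD
  set x : ι → ℝ := fun i => γ * e i / D with hx
  have hxlb : ∀ i, γ * r ≤ x i := by
    intro i
    have h1 : γ * r ≤ γ * e i := mul_le_mul_of_nonneg_left (helb i) hγ.le
    calc γ * r = γ * r / 1 := by ring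
    _ ≤ γ * e i / D := by
        apply div_le_div₀ (mul_nonneg hγ.le (le_trans hr0.le (helb i))) h1 hDpos hD1
  have hxub : ∀ i, x i ≤ γ / r := by
    intro i
    have h1 : γ * e i ≤ γ * 1 := mul_le_mul_of_nonneg_left (heub i) hγ.le
    calc x i ≤ γ * 1 / r := div_le_div₀ (by positivity) h1 hr0 hrD
    _ = γ / r := by ring
  set Z := ∑ j, w j * Real.exp (x j) with hZ
  have hZlb : Real.exp (γ * r) ≤ Z := by
    calc Real.exp (γ * r) = ∑ j, w j * Real.exp (γ * r) := by
          rw [← Finset.sum_mul, hwsum, one_mul]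
    _ ≤ Z := Finset.sum_le_sum fun j _ =>
        mul_le_mul_of_nonneg_left (Real.exp_le_exp.2 (hxlb j)) (hw j).le
  have hZub : Z ≤ Real.exp (γ / r) := by
    calc Z ≤ ∑ j, w j * Real.exp (γ / r) := Finset.sum_le_sum fun j _ =>
        mul_le_mul_of_nonneg_left (Real.exp_le_exp.2 (hxub j)) (hw j).le
    _ = Real.exp (γ / r) := by rw [← Finset.sum_mul, hwsum, one_mul]
  have hZpos : 0 < Z := lt_of_lt_of_le (Real.exp_pos _) hZlb
  set t := γ * (1 / r - r) with ht
  have htpos : 0 < t := by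
    apply mul_pos hγ
    have : r < 1 / r := by
      rw [lt_div_iff₀ hr0]
      nlinarith
    linarith
  have hteq : t = γ / r - γ * r := by rw [ht]; ring
  have key : ∀ i, |Real.exp (x i) / Z - 1| ≤ Real.exp t - 1 := by
    intro i
    rw [abs_le]
    constructor
    · -- lower bound
      have h1 : Real.exp (-t) ≤ Real.exp (x i) / Z := by
        have hnt : -t = γ * r - γ / r := by rw [hteq]; ring
        rw [hnt, Real.exp_sub]
        rw [div_le_div_iff₀ (Real.exp_pos _) hZpos]
        calc Real.exp (γ * r) * Z ≤ Real.exp (γ * r) * Real.exp (γ / r) := by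
              apply mul_le_mul_of_nonneg_left hZub (Real.exp_pos _).le
        _ ≤ Real.exp (x i) * Real.exp (γ / r) := by
              apply mul_le_mul_of_nonneg_right (Real.exp_le_exp.2 (hxlb i)) (Real.exp_pos _).le
      have h2 : 1 - t ≤ Real.exp (-t) := by
        have := Real.add_one_le_exp (-t)
        linarith
      have h3 : t ≤ Real.exp t - 1 := by
        have := Real.add_one_le_exp t
        linarith
      linarith
    · -- upper bound
      have h1 : Real.exp (x i) / Z ≤ Real.exp t := by
        rw [hteq, Real.exp_sub, div_le_div_iff₀ hZpos (Real.exp_pos _)]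
        calc Real.exp (x i) * Real.exp (γ * r) ≤ Real.exp (γ / r) * Real.exp (γ * r) := by
              apply mul_le_mul_of_nonneg_right (Real.exp_le_exp.2 (hxub i)) (Real.exp_pos _).le
        _ ≤ Real.exp (γ / r) * Z := mul_le_mul_of_nonneg_left hZlb (Real.exp_pos _).le
      linarith
  calc ∑ i, |w i * Real.exp (x i) / Z - w i|
      = ∑ i, w i * |Real.exp (x i) / Z - 1| := by
        apply Finset.sum_congr rfl
        intro i _
        have heq : w i * Real.exp (x i) / Z - w i = w i * (Real.exp (x i) / Z - 1) := by
          ring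
        rw [heq, abs_mul, abs_of_pos (hw i)]
    _ ≤ ∑ i, w i * (Real.exp t - 1) := Finset.sum_le_sum fun i _ =>
        mul_le_mul_of_nonneg_left (key i) (hw i).le
    _ = Real.exp t - 1 := by rw [← Finset.sum_mul, hwsum, one_mul]

/-- Transaction-cost bound for the EIITC update rule: on every trading day the
ℓ¹-distance between the updated portfolio `ψ_{k+1}` and the automatically reached
proportion `ψ'_k` is at most `e^{γ(1/r - r)} - 1`; hence if the transaction-cost ratio
satisfies `c_{k+1} ≤ (c/(1-c))·d(ψ_{k+1}, ψ'_k)` for some `c ∈ (0,1)`, then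
`c_{k+1} ≤ (c/(1-c))·(e^{γ(1/r - r)} - 1)`. -/
theorem EIITC_transaction_cost_bound
    {ι : Type*} [Fintype ι] [Nonempty ι]
    (r γ : ℝ) (hr0 : 0 < r) (hr1 : r < 1) (hγ : 0 < γ)
    (N : ℕ) (hN : 1 ≤ N)
    (s s' : ℕ → ι → ℝ) (ψ ψ' : ℕ → ι → ℝ)
    (hs_lb : ∀ k ∈ Finset.Icc 1 N, ∀ i, r ≤ s k i)
    (hs_max : ∀ k ∈ Finset.Icc 1 N, (∀ i, s k i ≤ 1) ∧ ∃ i, s k i = 1)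
    (d : ℕ → ℕ) (a : ℕ → ℕ → ℝ)
    (hd : ∀ k ∈ Finset.Icc 1 N, 1 ≤ d k ∧ d k ≤ k)
    (ha_nonneg : ∀ k ∈ Finset.Icc 1 N, ∀ l ∈ Finset.Icc 1 (d k), 0 ≤ a k l)
    (ha_sum : ∀ k ∈ Finset.Icc 1 N, ∑ l ∈ Finset.Icc 1 (d k), a k l = 1)
    (hs' : ∀ k ∈ Finset.Icc 1 N, ∀ i,
      s' (k + 1) i = ∑ l ∈ Finset.Icc 1 (d k), a k l * s (k - l + 1) i)
    (hψ1_pos : ∀ i, 0 < ψ 1 i) (hψ1_sum : ∑ i, ψ 1 i = 1)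
    (hψ' : ∀ k ∈ Finset.Icc 1 N, ∀ i,
      ψ' k i = ψ k i * s k i / (∑ j, ψ k j * s k j))
    (hupdate : ∀ k ∈ Finset.Icc 1 N, ∀ i,
      ψ (k + 1) i = ψ' k i * Real.exp (γ * s' (k + 1) i / (∑ j, ψ' k j * s' (k + 1) j)) /
        (∑ j, ψ' k j * Real.exp (γ * s' (k + 1) j / (∑ j', ψ' k j' * s' (k + 1) j')))) :
    ∀ k ∈ Finset.Icc 1 N,
      (∑ i, |ψ (k + 1) i - ψ' k i| ≤ Real.exp (γ * (1 / r - r)) - 1) ∧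
      ∀ c : ℝ, c ∈ Set.Ioo (0 : ℝ) 1 → ∀ ck : ℝ,
        ck ≤ (c / (1 - c)) * ∑ i, |ψ (k + 1) i - ψ' k i| →
        ck ≤ (c / (1 - c)) * (Real.exp (γ * (1 / r - r)) - 1) := by
  -- positivity and normalization of ψ', by induction on k
  have step : ∀ k ∈ Finset.Icc 1 N, ((∀ i, 0 < ψ k i) ∧ ∑ i, ψ k i = 1) →
      ((∀ i, 0 < ψ' k i) ∧ ∑ i, ψ' k i = 1) := by
    intro k hk ⟨hpos, hsum⟩
    have hS : 0 < ∑ j, ψ k j * s k j := by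
      apply Finset.sum_pos
      · intro j _
        exact mul_pos (hpos j) (lt_of_lt_of_le hr0 (hs_lb k hk j))
      · exact Finset.univ_nonempty
    constructor
    · intro i
      rw [hψ' k hk i]
      exact div_pos (mul_pos (hpos i) (lt_of_lt_of_le hr0 (hs_lb k hk i))) hS
    · have : ∑ i, ψ' k i = ∑ i, ψ k i * s k i / (∑ j, ψ k j * s k j) := by
        apply Finset.sum_congr rfl; intro i _; exact hψ' k hk i
      rw [this, ← Finset.sum_div, div_self hS.ne']
  have hψ'next : ∀ k ∈ Finset.Icc 1 N, ((∀ i, 0 < ψ' k i) ∧ ∑ i, ψ' k i = 1) →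
      ((∀ i, 0 < ψ (k + 1) i) ∧ ∑ i, ψ (k + 1) i = 1) := by
    intro k hk ⟨hpos, hsum⟩
    have hZ : 0 < ∑ j, ψ' k j * Real.exp (γ * s' (k + 1) j / (∑ j', ψ' k j' * s' (k + 1) j')) := by
      apply Finset.sum_pos
      · intro j _; exact mul_pos (hpos j) (Real.exp_pos _)
      · exact Finset.univ_nonempty
    constructor
    · intro i
      rw [hupdate k hk i]
      exact div_pos (mul_pos (hpos i) (Real.exp_pos _)) hZ
    · have : ∑ i, ψ (k + 1) i = ∑ i,
          ψ' k i * Real.exp (γ * s' (k + 1) i / (∑ j, ψ' k j * s' (k + 1) j)) /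
          (∑ j, ψ' k j * Real.exp (γ * s' (k + 1) j / (∑ j', ψ' k j' * s' (k + 1) j'))) := by
        apply Finset.sum_congr rfl; intro i _; exact hupdate k hk i
      rw [this, ← Finset.sum_div, div_self hZ.ne']
  have hψgood : ∀ k, 1 ≤ k → k ≤ N + 1 → (∀ i, 0 < ψ k i) ∧ ∑ i, ψ k i = 1 := by
    intro k
    induction k with
    | zero => intro h; omega
    | succ n ih =>
      intro _ hn1
      rcases Nat.eq_zero_or_pos n with h0 | h1
      · subst h0; exact ⟨hψ1_pos, hψ1_sum⟩
      · have hnN : n ∈ Finset.Icc 1 N := Finset.mem_Icc.2 ⟨h1, by omega⟩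
        exact hψ'next n hnN (step n hnN (ih h1 (by omega)))
  -- bounds on s'
  have hs'_bd : ∀ k ∈ Finset.Icc 1 N, ∀ i, r ≤ s' (k + 1) i ∧ s' (k + 1) i ≤ 1 := by
    intro k hk i
    rw [hs' k hk i]
    obtain ⟨hd1, hdk⟩ := hd k hk
    rw [Finset.mem_Icc] at hk
    have hmem : ∀ l ∈ Finset.Icc 1 (d k), k - l + 1 ∈ Finset.Icc 1 N := by
      intro l hl
      rw [Finset.mem_Icc] at hl ⊢
      omega
    constructor
    · calc r = ∑ l ∈ Finset.Icc 1 (d k), a k l * r := by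
            rw [← Finset.sum_mul, ha_sum k (Finset.mem_Icc.2 hk), one_mul]
      _ ≤ _ := Finset.sum_le_sum fun l hl =>
          mul_le_mul_of_nonneg_left (hs_lb _ (hmem l hl) i)
            (ha_nonneg k (Finset.mem_Icc.2 hk) l hl)
    · calc _ ≤ ∑ l ∈ Finset.Icc 1 (d k), a k l * 1 := Finset.sum_le_sum fun l hl =>
          mul_le_mul_of_nonneg_left ((hs_max _ (hmem l hl)).1 i)
            (ha_nonneg k (Finset.mem_Icc.2 hk) l hl)
      _ = 1 := by rw [← Finset.sum_mul, ha_sum k (Finset.mem_Icc.2 hk), one_mul]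
  intro k hk
  have hkIcc := Finset.mem_Icc.1 hk
  obtain ⟨hw, hwsum⟩ := step k hk (hψgood k hkIcc.1 (by omega))
  have hbound : ∑ i, |ψ (k + 1) i - ψ' k i| ≤ Real.exp (γ * (1 / r - r)) - 1 := by
    have hrw : ∑ i, |ψ (k + 1) i - ψ' k i| =
        ∑ i, |ψ' k i * Real.exp (γ * s' (k + 1) i / (∑ j, ψ' k j * s' (k + 1) j)) /
          (∑ j, ψ' k j * Real.exp (γ * s' (k + 1) j / (∑ j', ψ' k j' * s' (k + 1) j'))) -
          ψ' k i| := by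
      apply Finset.sum_congr rfl; intro i _; rw [hupdate k hk i]
    rw [hrw]
    exact EIITC_key r γ hr0 hr1 hγ (ψ' k) (s' (k + 1)) hw hwsum
      (fun i => (hs'_bd k hk i).1) (fun i => (hs'_bd k hk i).2)
  refine ⟨hbound, ?_⟩
  intro c hc ck hck
  have hfrac : 0 ≤ c / (1 - c) := div_nonneg hc.1.le (by linarith [hc.2])
  calc ck ≤ (c / (1 - c)) * ∑ i, |ψ (k + 1) i - ψ' k i| := hck
  _ ≤ (c / (1 - c)) * (Real.exp (γ * (1 / r - r)) - 1) :=
      mul_le_mul_of_nonneg_left hbound hfrac
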